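/- Fix integers b ≥ 2, e ≥ 1, u ≥ 1, a positive integer h, and let g be a positive integer such that every nonnegative integer is the sum of g e-th powers of nonnegative integers, and let p be the least nonnegative integer with b^p > g. Suppose σ is the least height-h, u-attracted number for base b and exponent e, and suppose that σ has more than e + p base-b digits and that its digits in places 0 through e + p are all equal to b-1. Then the least height-(h+1), u-attracted number σ' exists and satisfies S_{e,b}(σ') = σ. -/

import Mathlib

/-- `S e b x` is the sum of the `e`-th powers of the base-`b` digits of `x`. -/
def S (e b x : ℕ) : ℕ := ((Nat.digits b x).map (fun a => a ^ e)).sum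

/-- `x` is a height-`h`, `u`-attracted number for base `b` and exponent `e`. -/
def IsHeightAttracted (e b u h x : ℕ) : Prop :=
  0 < x ∧ (S e b)^[h] x = u ∧ ∀ n < h, (S e b)^[n] x ≠ u

namespace StmtFiveAux

lemma S_zero (e b : ℕ) : S e b 0 = 0 := by simp [S]

lemma S_ofDigits {b e : ℕ} (hb : 2 ≤ b) (he : 1 ≤ e) :
    ∀ (l : List ℕ), (∀ d ∈ l, d < b) →
      S e b (Nat.ofDigits b l) = (l.map (fun a => a ^ e)).sum := by
  intro l
  induction l with
  | nil => intro _; simp [S]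
  | cons d l ih =>
    intro hlt
    have hd : d < b := hlt d (by simp)
    have ihl := ih (fun x hx => hlt x (List.mem_cons_of_mem _ hx))
    set m := Nat.ofDigits b l with hm
    have hcons : Nat.ofDigits b (d :: l) = d + b * m := Nat.ofDigits_cons
    rcases Nat.eq_zero_or_pos (d + b * m) with h0 | hpos
    · have hd0 : d = 0 := by omega
      have hm0 : m = 0 := by
        have : b * m = 0 := by omega
        exact (Nat.mul_eq_zero.mp this).resolve_left (by omega)
      rw [hcons, h0, S_zero]
      have : (l.map (fun a => a ^ e)).sum = 0 := by rw [← ihl, hm0, S_zero]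
      simp [hd0, this, zero_pow (show e ≠ 0 by omega)]
    · rw [hcons]
      have hdig : Nat.digits b (d + b * m) = d :: Nat.digits b m := by
        rw [Nat.digits_def' (by omega : 1 < b) hpos]
        congr 1
        · rw [Nat.add_mul_mod_self_left, Nat.mod_eq_of_lt hd]
        · rw [Nat.add_mul_div_left _ _ (by omega : 0 < b), Nat.div_eq_of_lt hd]
          simp
      show S e b (d + b * m) = _
      unfold S
      rw [hdig]
      simp only [List.map_cons, List.sum_cons]
      have ihl' : (List.map (fun a => a ^ e) (Nat.digits b m)).sum
          = (List.map (fun a => a ^ e) l).sum := ihl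
      omega

lemma S_le_len {b e : ℕ} (hb : 2 ≤ b) (m : ℕ) :
    S e b m ≤ (Nat.digits b m).length * (b - 1) ^ e := by
  unfold S
  have h := List.sum_le_card_nsmul ((Nat.digits b m).map (fun a => a ^ e)) ((b - 1) ^ e) ?_
  · simpa [smul_eq_mul] using h
  · intro x hx
    obtain ⟨a, ha, rfl⟩ := List.mem_map.mp hx
    have : a < b := Nat.digits_lt_base (by omega) ha
    exact Nat.pow_le_pow_left (by omega) e

lemma S_pos {b e : ℕ} (hb : 2 ≤ b) {m : ℕ} (hm : 0 < m) : 0 < S e b m := by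
  have hne : Nat.digits b m ≠ [] := Nat.digits_ne_nil_iff_ne_zero.mpr (by omega)
  have hlast := Nat.getLast_digit_ne_zero b (show m ≠ 0 by omega)
  set a := (Nat.digits b m).getLast hne with ha
  have hmem : a ∈ Nat.digits b m := List.getLast_mem hne
  have h1 : a ^ e ∈ (Nat.digits b m).map (fun a => a ^ e) := List.mem_map_of_mem (f := fun a => a ^ e) hmem
  have h2 : a ^ e ≤ S e b m := List.single_le_sum (fun x _ => Nat.zero_le x) _ h1
  have : 0 < a ^ e := Nat.pow_pos (by omega)
  omega

lemma S_base_mul {b e : ℕ} (hb : 2 ≤ b) (he : 1 ≤ e) {w : ℕ} (hw : 0 < w) :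
    S e b (b * w) = S e b w := by
  have hdig : Nat.digits b (b * w) = 0 :: Nat.digits b w := by
    rw [Nat.digits_def' (by omega : 1 < b) (by positivity)]
    congr 1
    · simp [Nat.mul_mod_right]
    · rw [Nat.mul_div_cancel_left _ (by omega : 0 < b)]
  unfold S
  rw [hdig]
  simp [zero_pow (show e ≠ 0 by omega)]

lemma key_base' {c e : ℕ} (hc : 1 ≤ c) (he : 1 ≤ e) : (e + 2) * c ^ e < (c + 1) ^ (e + 1) := by
  induction e with
  | zero => omega
  | succ e ih =>
    rcases Nat.eq_zero_or_pos e with rfl | hepos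
    · have h1 : (c + 1) ^ (0 + 1 + 1) = c * c + 2 * c + 1 := by ring
      have h2 : c ≤ c * c := Nat.le_mul_of_pos_left c hc
      have h3 : (0 + 1 + 2) * c ^ (0 + 1) = 3 * c := by ring
      omega
    · have ih' := ih hepos
      have h1 : c ^ (e + 1) < (c + 1) ^ (e + 1) := Nat.pow_lt_pow_left (by omega) (by omega)
      have h2 : (e + 2) * c ^ e * c ≤ (c + 1) ^ (e + 1) * c :=
        Nat.mul_le_mul_right c (le_of_lt ih')
      have h3 : (e + 1 + 2) * c ^ (e + 1) = (e + 2) * c ^ e * c + c ^ (e + 1) := by ring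
      have h4 : (c + 1) ^ (e + 1 + 1) = (c + 1) ^ (e + 1) * c + (c + 1) ^ (e + 1) := by ring
      omega

lemma key_ineq' {c e : ℕ} (hc : 1 ≤ c) (he : 1 ≤ e) :
    ∀ k, e + 1 ≤ k → (k + 1) * c ^ e < (c + 1) ^ k := by
  intro k
  induction k with
  | zero => omega
  | succ k ih =>
    intro hk
    rcases Nat.lt_or_ge k (e + 1) with hke | hke
    · have : k = e := by omega
      subst this
      exact key_base' hc he
    · have ih' := ih hke
      have h1 : c ^ e < (c + 1) ^ k := by
        calc c ^ e < (c + 1) ^ e := Nat.pow_lt_pow_left (by omega) (by omega)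
        _ ≤ (c + 1) ^ k := Nat.pow_le_pow_right (by omega) (by omega)
      have h2 : (c + 1) ^ (k + 1) = (c + 1) ^ k * (c + 1) := by ring
      have h3 : (c + 1) ^ k * 2 ≤ (c + 1) ^ k * (c + 1) := Nat.mul_le_mul_left _ (by omega)
      have h4 : (k + 1 + 1) * c ^ e = (k + 1) * c ^ e + c ^ e := by ring
      omega

lemma key_ineq {b e : ℕ} (hb : 2 ≤ b) (he : 1 ≤ e) :
    ∀ k, e + 1 ≤ k → (k + 1) * (b - 1) ^ e < b ^ k := by
  intro k hk
  have h := key_ineq' (c := b - 1) (by omega) he k hk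
  have hbc : b - 1 + 1 = b := by omega
  rwa [hbc] at h

lemma digits_len_le_of_lt_pow {b : ℕ} (hb : 2 ≤ b) {m k : ℕ} (h : m < b ^ k) :
    (Nat.digits b m).length ≤ k := by
  rcases Nat.eq_zero_or_pos m with rfl | hm
  · simp
  · rw [Nat.digits_len b m (by omega) (by omega)]
    have := Nat.log_lt_of_lt_pow (show m ≠ 0 by omega) h
    omega

lemma pow_len_pred_le {b : ℕ} (hb : 2 ≤ b) {m : ℕ} (hm : 0 < m) :
    b ^ ((Nat.digits b m).length - 1) ≤ m := by
  rw [Nat.digits_len b m (by omega) (by omega)]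
  simpa using Nat.pow_log_le_self b (show m ≠ 0 by omega)

lemma digits_pow_sub_one {b : ℕ} (hb : 2 ≤ b) :
    ∀ k, Nat.digits b (b ^ k - 1) = List.replicate k (b - 1) := by
  intro k
  induction k with
  | zero => simp
  | succ k ih =>
    obtain ⟨c, hc⟩ : ∃ c, b ^ k = c + 1 := ⟨b ^ k - 1, by
      have : 1 ≤ b ^ k := Nat.one_le_pow _ _ (by omega); omega⟩
    have hpows : b ^ (k + 1) = b * c + b := by rw [pow_succ, hc]; ring
    have hpos : 0 < b ^ (k + 1) - 1 := by omega
    have hsplit : b ^ (k + 1) - 1 = b * (b ^ k - 1) + (b - 1) := by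
      have h1 : b ^ k - 1 = c := by omega
      rw [h1]
      omega
    rw [Nat.digits_def' (show 1 < b by omega) hpos, hsplit]
    congr 1
    · rw [Nat.mul_add_mod, Nat.mod_eq_of_lt (by omega)]
    · rw [Nat.mul_add_div (by omega : 0 < b), Nat.div_eq_of_lt (by omega)]
      simpa using ih

lemma ofDigits_replicate_max {b : ℕ} (hb : 2 ≤ b) (k : ℕ) :
    Nat.ofDigits b (List.replicate k (b - 1)) = b ^ k - 1 := by
  conv_lhs => rw [← digits_pow_sub_one hb k]
  exact Nat.ofDigits_digits b (b ^ k - 1)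

lemma sum_map_filter {e : ℕ} (he : 1 ≤ e) :
    ∀ l : List ℕ, ((l.filter (fun d => d ≠ 0)).map (fun a => a ^ e)).sum
      = (l.map (fun a => a ^ e)).sum := by
  intro l
  induction l with
  | nil => simp
  | cons d l ih =>
    by_cases hd : d = 0
    · subst hd
      simpa [List.filter_cons, zero_pow (show e ≠ 0 by omega)] using ih
    · rw [List.filter_cons]
      have hpd : (fun d => decide (d ≠ 0)) d = true := by simp [hd]
      simp only [hpd, if_true, List.map_cons, List.sum_cons, ih]

lemma filter_len_all {α : Type*} {p : α → Bool} :
    ∀ l : List α, (l.filter p).length = l.length → ∀ a ∈ l, p a := by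
  intro l
  induction l with
  | nil => simp
  | cons d l ih =>
    intro hlen a ha
    have hle := List.length_filter_le p l
    cases hpd : p d with
    | false =>
      rw [List.filter_cons, hpd] at hlen
      simp at hlen
      omega
    | true =>
      rw [List.filter_cons, hpd] at hlen
      simp at hlen
      rcases List.mem_cons.mp ha with rfl | ha'
      · exact hpd
      · exact hlen a ha'

lemma getD_digits {b : ℕ} (hb : 2 ≤ b) :
    ∀ (i n : ℕ), (Nat.digits b n).getD i 0 = n / b ^ i % b := by
  intro i
  induction i with
  | zero =>
    intro n
    rcases Nat.eq_zero_or_pos n with rfl | hn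
    · simp
    · rw [Nat.digits_def' (show 1 < b by omega) hn]
      simp
  | succ i ih =>
    intro n
    rcases Nat.eq_zero_or_pos n with rfl | hn
    · simp
    · rw [Nat.digits_def' (show 1 < b by omega) hn]
      show (Nat.digits b (n / b)).getD i 0 = _
      rw [ih (n / b), Nat.div_div_eq_div_mul]
      congr 2
      ring



end StmtFiveAux


open StmtFiveAux in
theorem stmt_5 (b e u g h p σ : ℕ) (hb : 2 ≤ b) (he : 1 ≤ e) (hu : 1 ≤ u) (hg : 1 ≤ g)
    (hh : 1 ≤ h)
    (hwaring : ∀ m : ℕ, ∃ f : Fin g → ℕ, ∑ i, (f i) ^ e = m)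
    (hp : b ^ p > g) (hpmin : ∀ q : ℕ, b ^ q > g → p ≤ q)
    (hσ : IsHeightAttracted e b u h σ)
    (hσmin : ∀ z : ℕ, IsHeightAttracted e b u h z → σ ≤ z)
    (hlen : e + p < (Nat.digits b σ).length)
    (hdigits : ∀ i : ℕ, i ≤ e + p → (Nat.digits b σ).getD i 0 = b - 1) :
    ∃ σ' : ℕ, IsHeightAttracted e b u (h + 1) σ' ∧
      (∀ z : ℕ, IsHeightAttracted e b u (h + 1) z → σ' ≤ z) ∧
      S e b σ' = σ := by
  classical
  have hb1 : 1 < b := hb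
  have he0 : e ≠ 0 := by omega
  have hp1 : 1 ≤ p := by
    by_contra hc
    push_neg at hc
    interval_cases p
    simp at hp
    omega
  have hβpos : 0 < (b - 1) ^ e := Nat.pow_pos (by omega)
  have hσpos : 0 < σ := hσ.1
  -- σ % b^(e+p+1) = b^(e+p+1) - 1
  have hmodk : ∀ k, k ≤ e + p + 1 → σ % b ^ k = b ^ k - 1 := by
    intro k
    induction k with
    | zero => intro _; simp [Nat.mod_one]
    | succ k ih =>
      intro hk
      have ihk := ih (by omega)
      have hdig : σ / b ^ k % b = b - 1 := by
        rw [← getD_digits hb k σ]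
        exact hdigits k (by omega)
      have hsplit : σ % b ^ (k + 1) = σ % b ^ k + b ^ k * (σ / b ^ k % b) := by
        rw [pow_succ]
        exact Nat.mod_mul
      rw [hsplit, ihk, hdig]
      have hpk : 1 ≤ b ^ k := Nat.one_le_pow _ _ (by omega)
      have h1 : b ^ k * (b - 1) + b ^ k = b ^ k * b := by
        have hb' : b - 1 + 1 = b := by omega
        calc b ^ k * (b - 1) + b ^ k = b ^ k * (b - 1 + 1) := by ring
        _ = b ^ k * b := by rw [hb']
      have h2 : b ^ (k + 1) = b ^ k * b := by ring
      omega
  have hmod : σ % b ^ (e + p + 1) = b ^ (e + p + 1) - 1 := hmodk (e + p + 1) le_rfl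
  have hpowN1 : 1 ≤ b ^ (e + p + 1) := Nat.one_le_pow _ _ (by omega)
  obtain ⟨A, hAeq⟩ : ∃ A, σ = (b ^ (e + p + 1) - 1) + b ^ (e + p + 1) * A := by
    refine ⟨σ / b ^ (e + p + 1), ?_⟩
    have hdm := Nat.div_add_mod σ (b ^ (e + p + 1))
    omega
  have hσge : b ^ (e + p + 1) - 1 ≤ σ := by
    have := Nat.mod_le σ (b ^ (e + p + 1))
    omega
  have hL0 : e + p + 1 ≤ (Nat.digits b σ).length := by omega
  -- anything ≤ σ has S-value < σ
  have hSbound : ∀ m, m ≤ σ → S e b m < σ := by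
    intro m hm
    have h1 : S e b m ≤ (Nat.digits b m).length * (b - 1) ^ e := S_le_len hb m
    have h2 : (Nat.digits b m).length ≤ (Nat.digits b σ).length :=
      Nat.le_digits_len_le b m σ hm
    have h3 : ((Nat.digits b σ).length - 1 + 1) * (b - 1) ^ e
        < b ^ ((Nat.digits b σ).length - 1) := key_ineq hb he _ (by omega)
    have h4 : b ^ ((Nat.digits b σ).length - 1) ≤ σ := pow_len_pred_le hb hσpos
    have h5 : (Nat.digits b m).length * (b - 1) ^ e
        ≤ ((Nat.digits b σ).length - 1 + 1) * (b - 1) ^ e := by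
      apply Nat.mul_le_mul_right
      omega
    omega
  -- u < σ
  have hiter : ∀ n, (S e b)^[n + 1] σ < σ := by
    intro n
    induction n with
    | zero => simpa using hSbound σ le_rfl
    | succ n ih =>
      rw [Function.iterate_succ_apply']
      exact hSbound _ (le_of_lt ih)
  obtain ⟨h', rfl⟩ : ∃ h', h = h' + 1 := ⟨h - 1, by omega⟩
  have huσ : u < σ := by
    have := hiter h'
    rwa [hσ.2.1] at this
  -- preimages of σ are > σ
  have hpre : ∀ y, S e b y = σ → σ < y := by
    intro y hy
    by_contra hc
    push_neg at hc
    have := hSbound y hc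
    omega
  -- construct z₀, a preimage of σ
  obtain ⟨q, r, hqr, hrβ⟩ : ∃ q r, (b - 1) ^ e * q + r = σ ∧ r < (b - 1) ^ e :=
    ⟨σ / (b - 1) ^ e, σ % (b - 1) ^ e, Nat.div_add_mod σ _, Nat.mod_lt σ hβpos⟩
  obtain ⟨f, hf⟩ := hwaring r
  have hfd : ∀ i : Fin g, f i < b - 1 := by
    intro i
    by_contra hc
    push_neg at hc
    have h1 : (b - 1) ^ e ≤ (f i) ^ e := Nat.pow_le_pow_left hc e
    have h2 : (f i) ^ e ≤ ∑ j, (f j) ^ e :=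
      Finset.single_le_sum (f := fun j => f j ^ e) (fun j _ => Nat.zero_le _)
        (Finset.mem_univ i)
    rw [hf] at h2
    omega
  have hl₀lt : ∀ d ∈ (List.ofFn f) ++ List.replicate q (b - 1), d < b := by
    intro d hd
    rcases List.mem_append.mp hd with h1 | h1
    · obtain ⟨i, rfl⟩ := List.mem_ofFn.mp h1
      have := hfd i
      omega
    · have := List.eq_of_mem_replicate h1
      omega
  obtain ⟨z₀, hz₀⟩ : ∃ z₀, z₀ = Nat.ofDigits b ((List.ofFn f) ++ List.replicate q (b - 1)) :=
    ⟨_, rfl⟩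
  have hSz₀ : S e b z₀ = σ := by
    rw [hz₀, S_ofDigits hb he _ hl₀lt]
    rw [List.map_append, List.sum_append]
    have h1 : ((List.ofFn f).map (fun a => a ^ e)).sum = r := by
      rw [List.map_ofFn, List.sum_ofFn]
      simpa using hf
    have h2 : ((List.replicate q (b - 1)).map (fun a => a ^ e)).sum = q * (b - 1) ^ e := by
      rw [List.map_replicate, List.sum_replicate, smul_eq_mul]
    rw [h1, h2]
    have hcomm : q * (b - 1) ^ e = (b - 1) ^ e * q := Nat.mul_comm _ _
    omega
  have hz₀pos : 0 < z₀ := by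
    rcases Nat.eq_zero_or_pos z₀ with h0 | h
    · rw [h0, S_zero] at hSz₀; omega
    · exact h
  have hz₀gt : σ < z₀ := hpre z₀ hSz₀
  have hz₀attr : IsHeightAttracted e b u (h' + 1 + 1) z₀ := by
    refine ⟨hz₀pos, ?_, ?_⟩
    · rw [Function.iterate_succ_apply, hSz₀]
      exact hσ.2.1
    · intro n hn
      rcases Nat.eq_zero_or_pos n with rfl | hnpos
      · simp only [Function.iterate_zero_apply]
        omega
      · obtain ⟨m, rfl⟩ : ∃ m, n = m + 1 := ⟨n - 1, by omega⟩
        rw [Function.iterate_succ_apply, hSz₀]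
        exact hσ.2.2 m (by omega)
  have hex : ∃ x, IsHeightAttracted e b u (h' + 1 + 1) x := ⟨z₀, hz₀attr⟩
  obtain ⟨σ', hσ'attr, hσ'min⟩ :
      ∃ y, IsHeightAttracted e b u (h' + 1 + 1) y ∧
        ∀ z, IsHeightAttracted e b u (h' + 1 + 1) z → y ≤ z :=
    ⟨Nat.find hex, Nat.find_spec hex, fun z hz => Nat.find_min' hex hz⟩
  obtain ⟨t, ht⟩ : ∃ t, S e b σ' = t := ⟨_, rfl⟩
  have htpos : 0 < t := by
    rw [← ht]
    exact S_pos hb hσ'attr.1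
  have htattr : IsHeightAttracted e b u (h' + 1) t := by
    refine ⟨htpos, ?_, ?_⟩
    · rw [← ht, ← Function.iterate_succ_apply]
      exact hσ'attr.2.1
    · intro n hn
      rw [← ht, ← Function.iterate_succ_apply]
      exact hσ'attr.2.2 (n + 1) (by omega)
  have hσt : σ ≤ t := hσmin t htattr
  rcases eq_or_lt_of_le hσt with heq | hlt
  · exact ⟨σ', hσ'attr, hσ'min, by rw [ht, ← heq]⟩
  -- now t > σ; derive a contradiction
  exfalso
  have hσ'lt : σ' < z₀ := by
    have h1 : σ' ≤ z₀ := hσ'min z₀ hz₀attr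
    rcases eq_or_lt_of_le h1 with h2 | h2
    · rw [h2, hSz₀] at ht
      omega
    · exact h2
  have hz₀lt : z₀ < b ^ (g + q) := by
    have h1 := Nat.ofDigits_lt_base_pow_length (show 1 < b by omega) hl₀lt
    have hlen₀ : ((List.ofFn f) ++ List.replicate q (b - 1)).length = g + q := by simp
    rw [hlen₀] at h1
    omega
  have hlenσ' : (Nat.digits b σ').length ≤ g + q :=
    digits_len_le_of_lt_pow hb (lt_trans hσ'lt hz₀lt)
  have htle : t ≤ (g + q) * (b - 1) ^ e := by
    have h1 := S_le_len hb σ' (e := e)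
    rw [ht] at h1
    have h2 : (Nat.digits b σ').length * (b - 1) ^ e ≤ (g + q) * (b - 1) ^ e :=
      Nat.mul_le_mul_right _ hlenσ'
    omega
  obtain ⟨i, hti⟩ : ∃ i, t = σ + 1 + i := ⟨t - σ - 1, by omega⟩
  have higβ : i + 1 ≤ g * (b - 1) ^ e := by
    have h1 : (g + q) * (b - 1) ^ e = g * (b - 1) ^ e + (b - 1) ^ e * q := by ring
    omega
  have hgβN : g * (b - 1) ^ e < b ^ (e + p) := by
    have h1 : g * (b - 1) ^ e < b ^ p * (b - 1) ^ e :=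
      Nat.mul_lt_mul_of_lt_of_le hp le_rfl hβpos
    have h2 : b ^ p * (b - 1) ^ e < b ^ p * b ^ e := by
      apply Nat.mul_lt_mul_of_le_of_lt le_rfl (Nat.pow_lt_pow_left (by omega) he0)
      positivity
    have h3 : b ^ p * b ^ e = b ^ (e + p) := by ring
    omega
  have higN : i < b ^ (e + p) := by omega
  have hiN1 : i < b ^ (e + p + 1) := by
    have : b ^ (e + p) < b ^ (e + p + 1) := Nat.pow_lt_pow_right (by omega) (by omega)
    omega
  have htdecomp : t = i + b ^ (e + p + 1) * (A + 1) := by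
    have h1 : b ^ (e + p + 1) * (A + 1) = b ^ (e + p + 1) * A + b ^ (e + p + 1) := by ring
    omega
  have hleni : (Nat.digits b i).length ≤ e + p := digits_len_le_of_lt_pow hb higN
  have hdt : Nat.digits b t =
      Nat.digits b i ++ List.replicate (e + p + 1 - (Nat.digits b i).length) 0
        ++ Nat.digits b (A + 1) := by
    have h1 := Nat.digits_append_zeroes_append_digits
      (b := b) (k := e + p + 1 - (Nat.digits b i).length) (n := i) (m := A + 1)
      (by omega) (by omega)
    have hexp : (Nat.digits b i).length + (e + p + 1 - (Nat.digits b i).length)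
        = e + p + 1 := by omega
    rw [hexp] at h1
    rw [htdecomp]
    exact h1.symm
  -- w: the number formed by the nonzero digits of t
  obtain ⟨w, hw⟩ : ∃ w, w = Nat.ofDigits b ((Nat.digits b t).filter (fun d => d ≠ 0)) :=
    ⟨_, rfl⟩
  have hfllt : ∀ d ∈ (Nat.digits b t).filter (fun d => d ≠ 0), d < b := by
    intro d hd
    exact Nat.digits_lt_base (by omega) (List.mem_filter.mp hd).1
  have hSw : S e b w = S e b t := by
    rw [hw, S_ofDigits hb he _ hfllt, sum_map_filter he]
    rfl
  have hStpos : 0 < S e b t := S_pos hb htpos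
  have hwpos : 0 < w := by
    rcases Nat.eq_zero_or_pos w with h0 | h
    · rw [h0, S_zero] at hSw
      omega
    · exact h
  have hdw : Nat.digits b w = (Nat.digits b t).filter (fun d => d ≠ 0) := by
    rw [hw]
    apply Nat.digits_ofDigits b (by omega) _ hfllt
    intro hne
    have h1 := List.getLast_mem hne
    have h2 := (List.mem_filter.mp h1).2
    simpa using h2
  have hwlt : w < b ^ ((Nat.digits b t).filter (fun d => d ≠ 0)).length := by
    have h1 := Nat.lt_base_pow_length_digits (b := b) (m := w) (by omega)
    rwa [hdw] at h1
  -- digits of 1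
  have hd1 : Nat.digits b 1 = [1] := by
    rw [Nat.digits_def' (show 1 < b by omega) one_pos,
      Nat.mod_eq_of_lt (by omega), Nat.div_eq_of_lt (by omega)]
    simp
  have hflsplit : (Nat.digits b t).filter (fun d => d ≠ 0)
      = (Nat.digits b i).filter (fun d => d ≠ 0)
        ++ (Nat.digits b (A + 1)).filter (fun d => d ≠ 0) := by
    rw [hdt, List.filter_append, List.filter_append, List.filter_replicate]
    simp
  have hn1 : ((Nat.digits b i).filter (fun d => d ≠ 0)).length ≤ e + p :=
    le_trans (List.length_filter_le _ _) hleni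
  -- number of nonzero digits of A+1
  have hn3 : ((Nat.digits b (A + 1)).filter (fun d => d ≠ 0)).length
      ≤ max (Nat.digits b A).length 1 := by
    have hAlt : A < b ^ (Nat.digits b A).length := Nat.lt_base_pow_length_digits (by omega)
    rcases lt_or_eq_of_le (Nat.succ_le_of_lt hAlt) with h1 | h1
    · have h2 : (Nat.digits b (A + 1)).length ≤ (Nat.digits b A).length :=
        digits_len_le_of_lt_pow hb h1
      exact le_trans (le_trans (List.length_filter_le _ _) h2) (le_max_left _ _)
    · have h2 : A + 1 = b ^ (Nat.digits b A).length := by omega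
      have h3 : Nat.digits b (A + 1) =
          List.replicate (Nat.digits b A).length 0 ++ [1] := by
        rw [h2, ← Nat.mul_one (b ^ (Nat.digits b A).length),
          Nat.digits_base_pow_mul (by omega) one_pos, hd1]
      rw [h3, List.filter_append, List.filter_replicate]
      simp
  -- w < σ
  have hwσ : w < σ := by
    rcases Nat.eq_zero_or_pos A with hA0 | hApos
    · -- A = 0 : σ = b^(e+p+1) - 1
      have hσval : σ = b ^ (e + p + 1) - 1 := by rw [hAeq, hA0]; ring_nf
      have hfl1 : (Nat.digits b t).filter (fun d => d ≠ 0)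
          = (Nat.digits b i).filter (fun d => d ≠ 0) ++ [1] := by
        rw [hflsplit, hA0, hd1]
        simp
      have hfllen : ((Nat.digits b t).filter (fun d => d ≠ 0)).length ≤ e + p + 1 := by
        rw [hfl1]
        simp only [List.length_append, List.length_cons, List.length_nil]
        omega
      have hwle : w ≤ σ := by
        have h1 : b ^ ((Nat.digits b t).filter (fun d => d ≠ 0)).length ≤ b ^ (e + p + 1) :=
          Nat.pow_le_pow_right (by omega) hfllen
        omega
      rcases lt_or_eq_of_le hwle with h1 | h1
      · exact h1
      · exfalso
        have hdσ : Nat.digits b σ = List.replicate (e + p + 1) (b - 1) := by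
          rw [hσval]
          exact digits_pow_sub_one hb (e + p + 1)
        have hE : (Nat.digits b t).filter (fun d => d ≠ 0)
            = List.replicate (e + p + 1) (b - 1) := by
          rw [← hdw, h1, hdσ]
        have h1mem : (1 : ℕ) ∈ (Nat.digits b t).filter (fun d => d ≠ 0) := by
          rw [hfl1]
          exact List.mem_append_right _ (by simp)
        have hb2 : b = 2 := by
          rw [hE] at h1mem
          have := List.eq_of_mem_replicate h1mem
          omega
        have hlen1 : ((Nat.digits b i).filter (fun d => d ≠ 0)).length = e + p := by
          have h2 := congrArg List.length hE
          rw [hfl1] at h2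
          simp only [List.length_append, List.length_replicate, List.length_cons,
            List.length_nil] at h2
          omega
        have hlenieq : (Nat.digits b i).length = e + p := by
          have := List.length_filter_le (fun d => decide (d ≠ 0)) (Nat.digits b i)
          omega
        have hallne : ∀ a ∈ Nat.digits b i, a ≠ 0 := by
          intro a ha
          have h3 := filter_len_all (p := fun d => decide (d ≠ 0)) (Nat.digits b i)
            (by omega) a ha
          simpa using h3
        have hdigI : Nat.digits b i = List.replicate (e + p) 1 := by
          rw [List.eq_replicate_iff]
          refine ⟨hlenieq, ?_⟩
          intro d hd
          have h4 : d < b := Nat.digits_lt_base (by omega) hd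
          have h5 := hallne d hd
          omega
        have hival : i = b ^ (e + p) - 1 := by
          have h6 : i = Nat.ofDigits b (Nat.digits b i) := (Nat.ofDigits_digits b i).symm
          rw [hdigI] at h6
          rw [h6]
          have h7 : List.replicate (e + p) 1 = List.replicate (e + p) (b - 1) := by rw [hb2]
          rw [h7]
          exact ofDigits_replicate_max hb (e + p)
        have hpN : 1 ≤ b ^ (e + p) := Nat.one_le_pow _ _ (by omega)
        omega
    · -- A ≥ 1
      have hdσ : Nat.digits b σ = List.replicate (e + p + 1) (b - 1) ++ Nat.digits b A := by
        have h1 := Nat.digits_append_zeroes_append_digits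
          (b := b) (k := 0) (n := b ^ (e + p + 1) - 1) (m := A) (by omega) hApos
        rw [digits_pow_sub_one hb (e + p + 1)] at h1
        simp only [List.replicate_zero, List.append_nil, List.length_replicate,
          Nat.add_zero] at h1
        rw [← hAeq] at h1
        rw [← h1]
      have hlenσeq : (Nat.digits b σ).length = e + p + 1 + (Nat.digits b A).length := by
        rw [hdσ]
        simp
      have hlenA : 1 ≤ (Nat.digits b A).length := by
        have : Nat.digits b A ≠ [] := Nat.digits_ne_nil_iff_ne_zero.mpr (by omega)
        exact List.length_pos_of_ne_nil this
      have hfltot : ((Nat.digits b t).filter (fun d => d ≠ 0)).length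
          ≤ e + p + (Nat.digits b A).length := by
        rw [hflsplit]
        simp only [List.length_append]
        have := hn3
        omega
      have h1 : b ^ ((Nat.digits b t).filter (fun d => d ≠ 0)).length
          ≤ b ^ ((Nat.digits b σ).length - 1) := by
        apply Nat.pow_le_pow_right (by omega)
        omega
      have h2 : b ^ ((Nat.digits b σ).length - 1) ≤ σ := pow_len_pred_le hb hσpos
      omega
  -- w behaves like t from step 1 on
  have hiterw : ∀ n, (S e b)^[n + 1] w = (S e b)^[n + 1] t := by
    intro n
    rw [Function.iterate_succ_apply, Function.iterate_succ_apply, hSw]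
  by_cases hwu : w = u
  · -- u is periodic
    have hper : (S e b)^[h' + 1] u = u := by
      have h1 : (S e b)^[h' + 1] w = u := by
        rw [hiterw h']
        exact htattr.2.1
      rwa [hwu] at h1
    have hNβ : (e + p + 1) * (b - 1) ^ e < b ^ (e + p) := key_ineq hb he (e + p) (by omega)
    have hinv : ∀ m, m < b ^ (e + p) → S e b m < b ^ (e + p) := by
      intro m hm
      have h1 := S_le_len hb m (e := e)
      have h2 : (Nat.digits b m).length ≤ e + p := digits_len_le_of_lt_pow hb hm
      have h3 : (Nat.digits b m).length * (b - 1) ^ e ≤ (e + p + 1) * (b - 1) ^ e :=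
        Nat.mul_le_mul_right _ (by omega)
      omega
    have hinvk : ∀ k m, m < b ^ (e + p) → (S e b)^[k] m < b ^ (e + p) := by
      intro k
      induction k with
      | zero => intro m hm; simpa using hm
      | succ k ih =>
        intro m hm
        rw [Function.iterate_succ_apply']
        exact hinv _ (ih m hm)
    have hdesc : ∀ m, b ^ (e + p) ≤ m → S e b m < m := by
      intro m hm
      have hmpos : 0 < m := by
        have : 1 ≤ b ^ (e + p) := Nat.one_le_pow _ _ (by omega)
        omega
      have h1 := S_le_len hb m (e := e)
      have hlm : e + p + 1 ≤ (Nat.digits b m).length := by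
        by_contra hc
        push_neg at hc
        have h2 : m < b ^ (Nat.digits b m).length := Nat.lt_base_pow_length_digits (by omega)
        have h3 : b ^ (Nat.digits b m).length ≤ b ^ (e + p) :=
          Nat.pow_le_pow_right (by omega) (by omega)
        omega
      have h3 : ((Nat.digits b m).length - 1 + 1) * (b - 1) ^ e
          < b ^ ((Nat.digits b m).length - 1) := key_ineq hb he _ (by omega)
      have h4 : b ^ ((Nat.digits b m).length - 1) ≤ m := pow_len_pred_le hb hmpos
      have h5 : (Nat.digits b m).length * (b - 1) ^ e
          ≤ ((Nat.digits b m).length - 1 + 1) * (b - 1) ^ e :=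
        Nat.mul_le_mul_right _ (by omega)
      omega
    have hreach : ∀ m, ∃ k, (S e b)^[k] m < b ^ (e + p) := by
      intro m
      induction m using Nat.strong_induction_on with
      | _ m ih =>
        rcases Nat.lt_or_ge m (b ^ (e + p)) with h1 | h1
        · exact ⟨0, by simpa using h1⟩
        · obtain ⟨k, hk⟩ := ih (S e b m) (hdesc m h1)
          exact ⟨k + 1, by rwa [Function.iterate_succ_apply]⟩
    have hmulper : ∀ j, (S e b)^[j * (h' + 1)] u = u := by
      intro j
      induction j with
      | zero => simp
      | succ j ih =>
        have h1 : (j + 1) * (h' + 1) = j * (h' + 1) + (h' + 1) := by ring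
        rw [h1, Function.iterate_add_apply, hper, ih]
    obtain ⟨k, hk⟩ := hreach u
    have husmall : u < b ^ (e + p) := by
      have h1 : (S e b)^[k * (h' + 1)] u = u := hmulper k
      have h2 : k * (h' + 1) = (k * (h' + 1) - k) + k := by
        have := Nat.le_mul_of_pos_right k (show 0 < h' + 1 by omega)
        omega
      rw [h2, Function.iterate_add_apply] at h1
      rw [← h1]
      exact hinvk _ _ hk
    -- second small preimage: w₂ = b * w
    have hSw₂ : S e b (b * w) = S e b w := S_base_mul hb he hwpos
    have hiterw₂ : ∀ n, (S e b)^[n + 1] (b * w) = (S e b)^[n + 1] t := by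
      intro n
      rw [Function.iterate_succ_apply, hSw₂, ← Function.iterate_succ_apply, hiterw n]
    have hw₂pos : 0 < b * w := by positivity
    have hw₂ne : b * w ≠ u := by
      rw [hwu]
      have h1 : 2 * u ≤ b * u := Nat.mul_le_mul_right u hb
      omega
    have hw₂σ : b * w < σ := by
      have h1 : b * w ≤ b * (b ^ (e + p) - 1) := by
        apply Nat.mul_le_mul_left
        rw [hwu]
        omega
      have h2 : b * (b ^ (e + p) - 1) + b = b ^ (e + p + 1) := by
        obtain ⟨c, hc⟩ : ∃ c, b ^ (e + p) = c + 1 :=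
          ⟨b ^ (e + p) - 1, by have := Nat.one_le_pow (e + p) b (show 0 < b by omega); omega⟩
        calc b * (b ^ (e + p) - 1) + b = b * c + b := by rw [hc]; simp
        _ = b * (c + 1) := by ring
        _ = b ^ (e + p + 1) := by rw [← hc, pow_succ, Nat.mul_comm]
      omega
    have hw₂attr : IsHeightAttracted e b u (h' + 1) (b * w) := by
      refine ⟨hw₂pos, ?_, ?_⟩
      · rw [hiterw₂ h']
        exact htattr.2.1
      · intro n hn
        rcases Nat.eq_zero_or_pos n with rfl | hnpos
        · simpa using hw₂ne
        · obtain ⟨m, rfl⟩ : ∃ m, n = m + 1 := ⟨n - 1, by omega⟩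
          rw [hiterw₂ m]
          exact htattr.2.2 (m + 1) (by omega)
    have := hσmin (b * w) hw₂attr
    omega
  · have hwattr : IsHeightAttracted e b u (h' + 1) w := by
      refine ⟨hwpos, ?_, ?_⟩
      · rw [hiterw h']
        exact htattr.2.1
      · intro n hn
        rcases Nat.eq_zero_or_pos n with rfl | hnpos
        · simpa using hwu
        · obtain ⟨m, rfl⟩ : ∃ m, n = m + 1 := ⟨n - 1, by omega⟩
          rw [hiterw m]
          exact htattr.2.2 (m + 1) (by omega)
    have := hσmin w hwattr
    omega
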